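/- For every real c > 0, the set V_c = {θ ∈ 𝕋^m : there exists a positive integer k with dist(k • θ, 0) < exp(−c·k)} is open and dense in the m-dimensional torus 𝕋^m = (Fin m → AddCircle (1:ℝ)). -/
import Mathlib

lemma int_coe_addCircle_zero (z : ℤ) : ((z : ℝ) : AddCircle (1 : ℝ)) = 0 := by
  rw [AddCircle.coe_eq_zero_iff]
  exact ⟨z, by simp⟩

lemma rat_den_mul_real (q : ℚ) : (q.den : ℝ) * (q : ℝ) = (q.num : ℝ) := by
  have hd : ((q.den : ℝ)) ≠ 0 := by exact_mod_cast q.den_nz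
  rw [Rat.cast_def]; field_simp

/-- For every `c > 0`, the set
`V_c = {θ ∈ 𝕋^m | ∃ k ≥ 1, dist (k • θ, 0) < exp (-c k)}` is open and dense in the torus
`𝕋^m = (Fin m → AddCircle 1)`. -/
theorem exponentially_liouville_approx_open_dense (m : ℕ) (c : ℝ) (hc : 0 < c) :
    IsOpen {θ : Fin m → AddCircle (1 : ℝ) |
        ∃ k : ℕ, 0 < k ∧ dist (k • θ) 0 < Real.exp (-(c * k))} ∧
      Dense {θ : Fin m → AddCircle (1 : ℝ) |
        ∃ k : ℕ, 0 < k ∧ dist (k • θ) 0 < Real.exp (-(c * k))} := by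
  constructor
  · have h : {θ : Fin m → AddCircle (1 : ℝ) |
        ∃ k : ℕ, 0 < k ∧ dist (k • θ) 0 < Real.exp (-(c * k))} =
        ⋃ k : ℕ, {θ : Fin m → AddCircle (1 : ℝ) |
          0 < k ∧ dist (k • θ) 0 < Real.exp (-(c * k))} := by
      ext θ; simp [Set.mem_iUnion]
    rw [h]
    refine isOpen_iUnion fun k => ?_
    rcases Nat.eq_zero_or_pos k with hk | hk
    · subst hk
      convert isOpen_empty
      ext θ; simp
    · have h2 : {θ : Fin m → AddCircle (1 : ℝ) |
          0 < k ∧ dist (k • θ) 0 < Real.exp (-(c * k))} =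
          {θ : Fin m → AddCircle (1 : ℝ) | dist (k • θ) 0 < Real.exp (-(c * k))} := by
        ext θ; simp [hk]
      rw [h2]
      exact isOpen_lt ((continuous_nsmul k).dist continuous_const) continuous_const
  · have hdense : Dense (Set.pi (Set.univ : Set (Fin m))
        (fun _ => Set.range (fun q : ℚ => ((q : ℝ) : AddCircle (1 : ℝ))))) := by
      refine dense_pi Set.univ fun i _ => ?_
      have hsurj : DenseRange ((↑) : ℝ → AddCircle (1 : ℝ)) :=
        QuotientAddGroup.mk_surjective.denseRange
      exact hsurj.comp Rat.denseRange_cast continuous_quotient_mk'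
    refine hdense.mono fun θ hθ => ?_
    choose q hq using fun i => hθ i (Set.mem_univ i)
    set k : ℕ := ∏ i, (q i).den with hkdef
    have hkpos : 0 < k := Finset.prod_pos fun i _ => (q i).pos
    refine ⟨k, hkpos, ?_⟩
    have hzero : k • θ = 0 := by
      funext i
      have hdvd : (q i).den ∣ k := Finset.dvd_prod_of_mem _ (Finset.mem_univ i)
      obtain ⟨t, ht⟩ := hdvd
      have : (k : ℝ) * (q i : ℝ) = ((t * (q i).num : ℤ) : ℝ) := by
        push_cast [ht]
        rw [mul_comm ((q i).den : ℝ) (t : ℝ), mul_assoc, rat_den_mul_real]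
      calc k • θ i = k • (((q i : ℝ) : AddCircle (1 : ℝ))) := by rw [← hq i]
        _ = (((k : ℝ) * (q i : ℝ) : ℝ) : AddCircle (1 : ℝ)) := by
            rw [← AddCircle.coe_nsmul, nsmul_eq_mul]
        _ = 0 := by rw [this]; exact int_coe_addCircle_zero _
    show dist (k • θ) 0 < Real.exp (-(c * k))
    rw [hzero, dist_self]
    exact Real.exp_pos _
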